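/- Let x = (x_n)_{n≥2} be a sequence with x_n ∈ {1,…,n}, let n₀ ≥ 2, and let R > 0 satisfy R ≤ ∑_{i=3}^{n₀+1} e^{i²}. Then the open ball B_{M_x}(P⁺_{x,2}, R) in (M_x, d_x) is contained in ⋃_{n=2}^{n₀} M_{x,n}. -/

import Mathlib

noncomputable section

/-- The tree distance on `ℝ²`. -/
def treeDist (p q : ℝ × ℝ) : ℝ :=
  if p.1 = q.1 then |p.2 - q.2| else |p.2| + |p.1 - q.1| + |q.2|

/-- `∑_{i=2}^n e^{i²}`. -/
def expSum (n : ℕ) : ℝ := ∑ i ∈ Finset.Icc 2 n, Real.exp ((i : ℝ) ^ 2)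

/-- `P⁺_{x,n} = (∑_{i=2}^n e^{i²}, e^{x_n})`. -/
def Pp (x : ℕ → ℕ) (n : ℕ) : ℝ × ℝ := (expSum n, Real.exp (x n))

/-- `P⁻_{x,n} = (∑_{i=2}^n e^{i²}, −e^{x_n})`. -/
def Pm (x : ℕ → ℕ) (n : ℕ) : ℝ × ℝ := (expSum n, -Real.exp (x n))

/-- `M_{x,n} = {P⁺_{x,n}, P⁻_{x,n}}`. -/
def Mpart (x : ℕ → ℕ) (n : ℕ) : Set (ℝ × ℝ) := {Pp x n, Pm x n}

/-- `M_x = ⋃_{n≥2} M_{x,n}`. -/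
def Mset (x : ℕ → ℕ) : Set (ℝ × ℝ) := ⋃ n ∈ {m : ℕ | 2 ≤ m}, Mpart x n

/-- `x = (x_n)_{n≥2}` is a sequence with `x_n ∈ {1,…,n}`. -/
def SeqOK (x : ℕ → ℕ) : Prop := ∀ n, 2 ≤ n → 1 ≤ x n ∧ x n ≤ n

/-- `A` is a `C`-net in `(M_x, d_x)`: `A ⊆ M_x` and every point of `M_x` is at
distance (infimum) at most `C` from `A`. -/
def IsNet (x : ℕ → ℕ) (C : ℝ) (A : Set (ℝ × ℝ)) : Prop :=
  A ⊆ Mset x ∧ ∀ p ∈ Mset x, ∀ ε > 0, ∃ a ∈ A, treeDist p a ≤ C + ε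

/-- `φ : A → B` is a `λ`-bi-Lipschitz bijection. -/
def IsBiLipOn (lam : ℝ) (A B : Set (ℝ × ℝ)) (φ : ℝ × ℝ → ℝ × ℝ) : Prop :=
  Set.BijOn φ A B ∧ ∀ p ∈ A, ∀ q ∈ A,
    lam⁻¹ * treeDist p q ≤ treeDist (φ p) (φ q) ∧
    treeDist (φ p) (φ q) ≤ lam * treeDist p q

lemma expSum_sub (n : ℕ) (hn : 2 ≤ n) :
    expSum n - expSum 2 = ∑ i ∈ Finset.Icc 3 n, Real.exp ((i : ℝ) ^ 2) := by
  have h : Finset.Icc 2 n = insert 2 (Finset.Icc 3 n) := by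
    ext i; simp; omega
  have hnot : 2 ∉ Finset.Icc 3 n := by simp
  have := Finset.sum_insert hnot (f := fun i : ℕ => Real.exp ((i : ℝ) ^ 2))
  rw [← h] at this
  simp only [expSum, this]
  norm_num

theorem ball_subset_union_Mpart (x : ℕ → ℕ) (hx : SeqOK x) (n₀ : ℕ) (hn₀ : 2 ≤ n₀)
    (R : ℝ) (hR0 : 0 < R) (hR : R ≤ ∑ i ∈ Finset.Icc 3 (n₀ + 1), Real.exp ((i : ℝ) ^ 2)) :
    {p ∈ Mset x | treeDist (Pp x 2) p < R} ⊆ ⋃ n ∈ Finset.Icc 2 n₀, Mpart x n := by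
  rintro p ⟨hpM, hd⟩
  simp only [Mset, Set.mem_iUnion, Set.mem_setOf_eq] at hpM
  obtain ⟨n, hn2, hp⟩ := hpM
  simp only [Set.mem_iUnion, Finset.mem_Icc]
  refine ⟨n, ⟨hn2, ?_⟩, hp⟩
  by_contra h
  push_neg at h
  have hn1 : n₀ + 1 ≤ n := h
  -- distance lower bound
  have hsum : expSum n - expSum 2 = ∑ i ∈ Finset.Icc 3 n, Real.exp ((i : ℝ) ^ 2) :=
    expSum_sub n hn2
  have hpos : (0:ℝ) < ∑ i ∈ Finset.Icc 3 n, Real.exp ((i : ℝ) ^ 2) := by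
    apply Finset.sum_pos (fun i _ => Real.exp_pos _)
    exact ⟨3, by simp; omega⟩
  have hne : expSum 2 ≠ expSum n := by
    intro he; rw [← he] at hsum; simp at hsum; linarith
  have hmono : (∑ i ∈ Finset.Icc 3 (n₀ + 1), Real.exp ((i : ℝ) ^ 2)) ≤
      ∑ i ∈ Finset.Icc 3 n, Real.exp ((i : ℝ) ^ 2) := by
    apply Finset.sum_le_sum_of_subset_of_nonneg
    · exact Finset.Icc_subset_Icc_right hn1
    · exact fun i _ _ => (Real.exp_pos _).le
  have hdist : expSum n - expSum 2 ≤ treeDist (Pp x 2) p := by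
    have habs : expSum n - expSum 2 ≤ |expSum 2 - expSum n| := by
      rw [abs_sub_comm]; exact le_abs_self _
    rcases hp with hp | hp <;> subst hp <;>
      · rw [treeDist, if_neg]
        swap
        · exact hne
        simp only [Pp, Pm]
        have h1 : (0:ℝ) ≤ |Real.exp (x 2)| := abs_nonneg _
        have h2 : (0:ℝ) ≤ |Real.exp (x n)| := abs_nonneg _
        have h3 : (0:ℝ) ≤ |-Real.exp (x n)| := abs_nonneg _
        linarith
  linarith
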